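/- Let α be irrational and N ≥ 2 with N = first(N) + last(N). Then for every m with 0 ≤ m < last(N), the point m + first(N) is the successor of m on the circle: 0 ≤ m + first(N) < N, {m·α} < {(m + first(N))·α}, and for every i with 0 < i < N, either {i·α} ≤ {m·α} or {i·α} ≥ {(m + first(N))·α}. -/

import Mathlib

private lemma fract_add_eq (x y : ℝ) (h : Int.fract x + Int.fract y < 1) :
    Int.fract (x + y) = Int.fract x + Int.fract y := by
  have hxy : x + y = (Int.fract x + Int.fract y) + ((⌊x⌋ + ⌊y⌋ : ℤ) : ℝ) := by
    simp only [Int.fract]; push_cast; ring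
  rw [hxy, Int.fract_add_intCast]
  exact Int.fract_eq_self.2 ⟨add_nonneg (Int.fract_nonneg _) (Int.fract_nonneg _), h⟩

private lemma fract_add_eq' (x y : ℝ) (h : 1 ≤ Int.fract x + Int.fract y) :
    Int.fract (x + y) = Int.fract x + Int.fract y - 1 := by
  have hxy : x + y = (Int.fract x + Int.fract y - 1) + ((⌊x⌋ + ⌊y⌋ + 1 : ℤ) : ℝ) := by
    simp only [Int.fract]; push_cast; ring
  rw [hxy, Int.fract_add_intCast]
  exact Int.fract_eq_self.2 ⟨by linarith, by
    have := Int.fract_lt_one x; have := Int.fract_lt_one y; linarith⟩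

private lemma fract_sub_eq (x y : ℝ) (h : Int.fract y ≤ Int.fract x) :
    Int.fract (x - y) = Int.fract x - Int.fract y := by
  have hxy : x - y = (Int.fract x - Int.fract y) + ((⌊x⌋ - ⌊y⌋ : ℤ) : ℝ) := by
    simp only [Int.fract]; push_cast; ring
  rw [hxy, Int.fract_add_intCast]
  exact Int.fract_eq_self.2 ⟨by linarith, by
    have := Int.fract_lt_one x; have := Int.fract_nonneg y; linarith⟩

private lemma fract_sub_eq' (x y : ℝ) (h : Int.fract x < Int.fract y) :
    Int.fract (x - y) = Int.fract x - Int.fract y + 1 := by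
  have hxy : x - y = (Int.fract x - Int.fract y + 1) + ((⌊x⌋ - ⌊y⌋ - 1 : ℤ) : ℝ) := by
    simp only [Int.fract]; push_cast; ring
  rw [hxy, Int.fract_add_intCast]
  exact Int.fract_eq_self.2 ⟨by
    have := Int.fract_nonneg x; have := Int.fract_lt_one y; linarith, by linarith⟩

private lemma fract_pos_irr (α : ℝ) (hα : Irrational α) (n : ℕ) (hn : 0 < n) :
    0 < Int.fract ((n : ℝ) * α) := by
  have hi : Irrational ((n : ℝ) * α) := hα.natCast_mul hn.ne'
  rcases (Int.fract_nonneg ((n : ℝ) * α)).lt_or_eq with h | h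
  · exact h
  · exfalso
    have hfl : (n : ℝ) * α = (⌊(n : ℝ) * α⌋ : ℝ) := by
      have := Int.fract ((n : ℝ) * α)
      simp only [Int.fract] at h
      linarith
    exact hi.ne_int ⌊(n : ℝ) * α⌋ hfl

theorem successor_add_first (α : ℝ) (hα : Irrational α) (N : ℕ) (hN : 2 ≤ N)
    (f l : ℕ) (hf0 : 0 < f) (hfN : f < N)
    (hf : ∀ m : ℕ, 0 < m → m < N → Int.fract (f * α) ≤ Int.fract (m * α))
    (hl0 : 0 < l) (hlN : l < N)
    (hl : ∀ m : ℕ, 0 < m → m < N → Int.fract (m * α) ≤ Int.fract (l * α))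
    (hNM : N = f + l) :
    ∀ m : ℕ, m < l →
      m + f < N ∧ Int.fract (m * α) < Int.fract ((m + f : ℕ) * α) ∧
      ∀ i : ℕ, 0 < i → i < N →
        Int.fract (i * α) ≤ Int.fract (m * α) ∨
        Int.fract (i * α) ≥ Int.fract ((m + f : ℕ) * α) := by
  intro m hm
  have hmfN : m + f < N := by omega
  have hcast : ((m + f : ℕ) : ℝ) * α = (m : ℝ) * α + (f : ℝ) * α := by push_cast; ring
  have hfpos : 0 < Int.fract ((f : ℝ) * α) := fract_pos_irr α hα f hf0
  -- sum < 1
  have hsum : Int.fract ((m : ℝ) * α) + Int.fract ((f : ℝ) * α) < 1 := by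
    by_contra h1
    push_neg at h1
    have heq : Int.fract (((m + f : ℕ) : ℝ) * α)
        = Int.fract ((m : ℝ) * α) + Int.fract ((f : ℝ) * α) - 1 := by
      rw [hcast]; exact fract_add_eq' _ _ h1
    have := hf (m + f) (by omega) hmfN
    rw [heq] at this
    have := Int.fract_lt_one ((m : ℝ) * α)
    linarith
  have heq : Int.fract (((m + f : ℕ) : ℝ) * α)
      = Int.fract ((m : ℝ) * α) + Int.fract ((f : ℝ) * α) := by
    rw [hcast]; exact fract_add_eq _ _ hsum
  refine ⟨hmfN, by rw [heq]; linarith, ?_⟩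
  intro i hi0 hiN
  by_contra hcon
  push_neg at hcon
  obtain ⟨h1, h2⟩ := hcon
  rw [heq] at h2
  rcases lt_trichotomy i m with hlt | heqim | hgt
  · -- i < m : consider k = m - i, then k + f
    set k := m - i with hk
    have hkcast : ((k : ℕ) : ℝ) * α = (m : ℝ) * α - (i : ℝ) * α := by
      rw [hk]; push_cast [Nat.cast_sub hlt.le]; ring
    have hkf : Int.fract ((k : ℝ) * α)
        = Int.fract ((m : ℝ) * α) - Int.fract ((i : ℝ) * α) + 1 := by
      rw [hkcast]; exact fract_sub_eq' _ _ h1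
    have hsum2 : 1 ≤ Int.fract ((k : ℝ) * α) + Int.fract ((f : ℝ) * α) := by
      rw [hkf]; linarith
    have hkfcast : ((k + f : ℕ) : ℝ) * α = (k : ℝ) * α + (f : ℝ) * α := by push_cast; ring
    have heq2 : Int.fract (((k + f : ℕ) : ℝ) * α)
        = Int.fract ((k : ℝ) * α) + Int.fract ((f : ℝ) * α) - 1 := by
      rw [hkfcast]; exact fract_add_eq' _ _ hsum2
    have hmin := hf (k + f) (by omega) (by omega)
    rw [heq2, hkf] at hmin
    linarith
  · exact absurd h1 (by rw [heqim]; exact lt_irrefl _)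
  · -- m < i : consider k = i - m
    set k := i - m with hk
    have hkcast : ((k : ℕ) : ℝ) * α = (i : ℝ) * α - (m : ℝ) * α := by
      rw [hk]; push_cast [Nat.cast_sub hgt.le]; ring
    have hkf : Int.fract ((k : ℝ) * α)
        = Int.fract ((i : ℝ) * α) - Int.fract ((m : ℝ) * α) := by
      rw [hkcast]; exact fract_sub_eq _ _ h1.le
    have hmin := hf k (by omega) (by omega)
    rw [hkf] at hmin
    linarith
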